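/- Let n ≥ 1 be a natural number, m > 0, ε > 0, and let α > 1 be a real number. Set λ := 2m/((n+1)·ε). Let y_1, …, y_{n+1} ∈ ℝ, and writing clamp(y) := max(−m, min(y, m)), set M := (1/n)·Σ_{i=1}^{n} clamp(y_i) and M' := (1/(n+1))·Σ_{i=1}^{n+1} clamp(y_i). Then (α−1)⁻¹·ln ∫_ℝ ℓ_{M,λ}(x)^α · ℓ_{M',λ}(x)^{1−α} dx ≤ (α−1)⁻¹·ln( (α/(2α−1))·exp((α−1)·ε) + ((α−1)/(2α−1))·exp(−α·ε) ). -/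

import Mathlib

open MeasureTheory Real Finset

/-- Laplace density with location `m` and scale `lam`. -/
noncomputable def laplacePDF (m lam x : ℝ) : ℝ :=
  (1 / (2 * lam)) * Real.exp (-|x - m| / lam)

open Set in
lemma std_integral {α : ℝ} (hα : 1 < α) {s : ℝ} (hs : 0 ≤ s) :
    (∫ u : ℝ, (1/2 : ℝ) * Real.exp (-(α * |u|) - (1 - α) * |u - s|)) =
      α / (2*α - 1) * Real.exp ((α - 1) * s)
        + (α - 1) / (2*α - 1) * Real.exp (-(α * s)) := by
  have h21 : (0:ℝ) < 2*α - 1 := by linarith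
  set f : ℝ → ℝ := fun u => (1/2 : ℝ) * Real.exp (-(α * |u|) - (1 - α) * |u - s|) with hf
  -- region 1 : Iic 0
  have h1 : ∀ u ∈ Iic (0:ℝ), f u = (1/2 : ℝ) * Real.exp ((α - 1) * s) * Real.exp u := by
    intro u hu
    have hu' : u ≤ 0 := hu
    rw [show (1/2:ℝ) * Real.exp ((α-1)*s) * Real.exp u
        = 1/2 * Real.exp ((α-1)*s + u) by rw [Real.exp_add]; ring]
    simp only [hf]
    congr 1
    rw [abs_of_nonpos hu', abs_of_nonpos (by linarith : u - s ≤ 0)]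
    ring
  have hint1 : IntegrableOn (fun u : ℝ => (1/2 : ℝ) * Real.exp ((α - 1) * s) * Real.exp u)
      (Iic (0:ℝ)) := (integrableOn_exp_Iic 0).const_mul _
  have hf1 : IntegrableOn f (Iic (0:ℝ)) :=
    hint1.congr_fun (fun u hu => (h1 u hu).symm) measurableSet_Iic
  have hv1 : (∫ u in Iic (0:ℝ), f u) = (1/2 : ℝ) * Real.exp ((α - 1) * s) := by
    rw [setIntegral_congr_fun measurableSet_Iic h1, integral_const_mul, integral_exp_Iic_zero,
      mul_one]
  -- region 3 : Ioi s
  have h3 : ∀ u ∈ Ioi s, f u = (1/2 : ℝ) * Real.exp ((1 - α) * s) * Real.exp (-u) := by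
    intro u hu
    have hu' : s < u := hu
    rw [show (1/2:ℝ) * Real.exp ((1-α)*s) * Real.exp (-u)
        = 1/2 * Real.exp ((1-α)*s + -u) by rw [Real.exp_add]; ring]
    simp only [hf]
    congr 1
    rw [abs_of_nonneg (by linarith : (0:ℝ) ≤ u), abs_of_nonneg (by linarith : (0:ℝ) ≤ u - s)]
    ring
  have hexpneg : IntegrableOn (fun u : ℝ => Real.exp (-u)) (Ioi s) := by
    have := exp_neg_integrableOn_Ioi s (one_pos)
    simpa using this
  have hint3 : IntegrableOn (fun u : ℝ => (1/2 : ℝ) * Real.exp ((1 - α) * s) * Real.exp (-u))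
      (Ioi s) := hexpneg.const_mul _
  have hf3 : IntegrableOn f (Ioi s) :=
    hint3.congr_fun (fun u hu => (h3 u hu).symm) measurableSet_Ioi
  have hv3 : (∫ u in Ioi s, f u) = (1/2 : ℝ) * Real.exp (-(α * s)) := by
    rw [setIntegral_congr_fun measurableSet_Ioi h3, integral_const_mul, integral_exp_neg_Ioi,
      mul_assoc, ← Real.exp_add]
    congr 2
    ring
  -- region 2 : Ioc 0 s
  have h2 : ∀ u ∈ Ioc (0:ℝ) s, f u
      = (1/2 : ℝ) * Real.exp ((α - 1) * s) * Real.exp (-((2*α - 1) * u)) := by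
    intro u hu
    obtain ⟨hu0, hus⟩ := hu
    rw [show (1/2:ℝ) * Real.exp ((α-1)*s) * Real.exp (-((2*α-1)*u))
        = 1/2 * Real.exp ((α-1)*s + -((2*α-1)*u)) by rw [Real.exp_add]; ring]
    simp only [hf]
    congr 1
    rw [abs_of_nonneg (by linarith : (0:ℝ) ≤ u), abs_of_nonpos (by linarith : u - s ≤ 0)]
    ring
  have hcont : Continuous f := by
    apply Continuous.mul continuous_const
    apply Real.continuous_exp.comp
    fun_prop
  have hf2 : IntegrableOn f (Ioc (0:ℝ) s) := hcont.integrableOn_Ioc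
  have hv2 : (∫ u in Ioc (0:ℝ) s, f u)
      = (1/2 : ℝ) * Real.exp ((α - 1) * s) * ((1 - Real.exp (-((2*α-1)*s))) / (2*α - 1)) := by
    rw [setIntegral_congr_fun measurableSet_Ioc h2, ← intervalIntegral.integral_of_le hs,
      intervalIntegral.integral_const_mul]
    have hmul : ∀ u : ℝ, Real.exp (-((2*α-1)*u)) = Real.exp (u * (-(2*α-1))) := by
      intro u; congr 1; ring
    simp_rw [hmul]
    rw [intervalIntegral.integral_comp_mul_right Real.exp
      (show -(2*α-1) ≠ 0 by intro hh; nlinarith), integral_exp, smul_eq_mul,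
      show s * -(2*α-1) = -((2*α-1)*s) by ring, show (0:ℝ) * -(2*α-1) = 0 by ring, Real.exp_zero]
    congr 1
    rw [inv_neg, div_eq_mul_inv]
    ring
  -- assemble
  have hIoi : IntegrableOn f (Ioi (0:ℝ)) := by
    rw [← Ioc_union_Ioi_eq_Ioi hs]
    exact hf2.union hf3
  have hsplit : (∫ u in Ioi (0:ℝ), f u) = (∫ u in Ioc (0:ℝ) s, f u) + ∫ u in Ioi s, f u := by
    rw [← Ioc_union_Ioi_eq_Ioi hs]
    exact setIntegral_union (Ioc_disjoint_Ioi le_rfl) measurableSet_Ioi hf2 hf3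
  have htot : (∫ u : ℝ, f u) = (∫ u in Iic (0:ℝ), f u) + ∫ u in Ioi (0:ℝ), f u :=
    (intervalIntegral.integral_Iic_add_Ioi hf1 hIoi).symm
  rw [htot, hsplit, hv1, hv2, hv3]
  have hee : Real.exp ((α - 1) * s) * Real.exp (-((2*α-1)*s)) = Real.exp (-(α * s)) := by
    rw [← Real.exp_add]; congr 1; ring
  field_simp
  nlinarith [hee, Real.exp_pos ((α-1)*s), Real.exp_pos (-(α*s)),
    (show Real.exp ((α - 1) * s) * Real.exp (-(s*(2*α-1))) = Real.exp (-(α * s)) by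
      rw [mul_comm s]; exact hee)]

lemma lap_integral {lam α : ℝ} (hlam : 0 < lam) (hα : 1 < α) (a t : ℝ) (ht : 0 ≤ t) :
    (∫ x : ℝ, laplacePDF a lam x ^ α * laplacePDF (a + t) lam x ^ (1 - α)) =
      α / (2*α - 1) * Real.exp ((α - 1) * (t/lam))
        + (α - 1) / (2*α - 1) * Real.exp (-(α * (t/lam))) := by
  set g : ℝ → ℝ := fun u => (1/2 : ℝ) * Real.exp (-(α * |u|) - (1 - α) * |u - t/lam|) with hg
  have hpt : ∀ x : ℝ, laplacePDF a lam x ^ α * laplacePDF (a + t) lam x ^ (1 - α)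
      = (1/lam) * g ((x - a)/lam) := by
    intro x
    have hC : ((1:ℝ)/(2*lam)) ^ α * ((1:ℝ)/(2*lam)) ^ (1-α) = 1/(2*lam) := by
      rw [← Real.rpow_add (by positivity)]
      norm_num
    have habs1 : |(x - a)/lam| = |x - a| / lam := by
      rw [abs_div, abs_of_pos hlam]
    have habs2 : |(x - a)/lam - t/lam| = |x - (a + t)| / lam := by
      rw [show (x - a)/lam - t/lam = (x - (a+t))/lam by ring, abs_div, abs_of_pos hlam]
    simp only [laplacePDF, hg]
    rw [Real.mul_rpow (by positivity) (Real.exp_pos _).le,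
        Real.mul_rpow (by positivity) (Real.exp_pos _).le,
        ← Real.exp_mul, ← Real.exp_mul, mul_mul_mul_comm, hC, ← Real.exp_add,
        habs1, habs2]
    rw [show -(α * (|x - a| / lam)) - (1 - α) * (|x - (a+t)| / lam)
          = -|x - a| / lam * α + -|x - (a+t)| / lam * (1 - α) by ring]
    ring
  calc (∫ x : ℝ, laplacePDF a lam x ^ α * laplacePDF (a + t) lam x ^ (1 - α))
      = ∫ x : ℝ, (1/lam) * g ((x - a)/lam) := by simp_rw [hpt]
    _ = (1/lam) * ∫ x : ℝ, g ((x - a)/lam) := integral_const_mul _ _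
    _ = (1/lam) * ∫ x : ℝ, g (x/lam) := by
        rw [integral_sub_right_eq_self (fun x => g (x/lam)) a]
    _ = (1/lam) * (|lam| • ∫ u : ℝ, g u) := by rw [MeasureTheory.Measure.integral_comp_div g lam]
    _ = ∫ u : ℝ, g u := by
        rw [abs_of_pos hlam, smul_eq_mul, ← mul_assoc]
        field_simp
    _ = α / (2*α - 1) * Real.exp ((α - 1) * (t/lam))
        + (α - 1) / (2*α - 1) * Real.exp (-(α * (t/lam))) :=
        std_integral hα (by positivity)

lemma lap_integral' {lam α : ℝ} (hlam : 0 < lam) (hα : 1 < α) (M M' : ℝ) :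
    (∫ x : ℝ, laplacePDF M lam x ^ α * laplacePDF M' lam x ^ (1 - α)) =
      α / (2*α - 1) * Real.exp ((α - 1) * (|M - M'|/lam))
        + (α - 1) / (2*α - 1) * Real.exp (-(α * (|M - M'|/lam))) := by
  rcases le_total M M' with h | h
  · have habs : |M - M'| = M' - M := by rw [abs_of_nonpos (by linarith)]; ring
    have := lap_integral hlam hα M (M' - M) (by linarith)
    rw [show M + (M' - M) = M' by ring] at this
    rw [this, habs]
  · have habs : |M - M'| = M - M' := abs_of_nonneg (by linarith)
    have hrefl : (∫ x : ℝ, laplacePDF M lam x ^ α * laplacePDF M' lam x ^ (1 - α))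
        = ∫ x : ℝ, laplacePDF M' lam x ^ α * laplacePDF M lam x ^ (1 - α) := by
      have hcongr : ∀ x : ℝ,
          laplacePDF M lam (M + M' - x) ^ α * laplacePDF M' lam (M + M' - x) ^ (1 - α)
          = laplacePDF M' lam x ^ α * laplacePDF M lam x ^ (1 - α) := by
        intro x
        have e1 : laplacePDF M lam (M + M' - x) = laplacePDF M' lam x := by
          simp only [laplacePDF]
          rw [show M + M' - x - M = -(x - M') by ring, abs_neg]
        have e2 : laplacePDF M' lam (M + M' - x) = laplacePDF M lam x := by
          simp only [laplacePDF]
          rw [show M + M' - x - M' = -(x - M) by ring, abs_neg]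
        rw [e1, e2]
      have hsub : (∫ x : ℝ, laplacePDF M lam (M + M' - x) ^ α
            * laplacePDF M' lam (M + M' - x) ^ (1 - α))
          = ∫ x : ℝ, laplacePDF M lam x ^ α * laplacePDF M' lam x ^ (1 - α) := by
        have hneg : (∫ x : ℝ, laplacePDF M lam (M + M' - x) ^ α
              * laplacePDF M' lam (M + M' - x) ^ (1 - α))
            = ∫ x : ℝ, laplacePDF M lam (M + M' + x) ^ α
              * laplacePDF M' lam (M + M' + x) ^ (1 - α) := by
          rw [show (fun x : ℝ => laplacePDF M lam (M + M' - x) ^ α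
              * laplacePDF M' lam (M + M' - x) ^ (1 - α))
              = (fun x : ℝ => (fun y : ℝ => laplacePDF M lam (M + M' + y) ^ α
              * laplacePDF M' lam (M + M' + y) ^ (1 - α)) (-x)) by
            funext x; simp [sub_eq_add_neg]]
          exact integral_neg_eq_self (fun y : ℝ => laplacePDF M lam (M + M' + y) ^ α
            * laplacePDF M' lam (M + M' + y) ^ (1 - α)) volume
        rw [hneg]
        exact integral_add_left_eq_self (fun y : ℝ => laplacePDF M lam y ^ α
          * laplacePDF M' lam y ^ (1 - α)) (M + M')
      rw [← hsub]
      exact integral_congr_ae (Filter.Eventually.of_forall fun x => hcongr x)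
    rw [hrefl, habs]
    have := lap_integral hlam hα M' (M - M') (by linarith)
    rw [show M' + (M - M') = M by ring] at this
    rw [this]

lemma A_mono {α : ℝ} (hα : 1 < α) {s e : ℝ} (hs0 : 0 ≤ s) (hse : s ≤ e) :
    α / (2*α - 1) * Real.exp ((α - 1) * s) + (α - 1) / (2*α - 1) * Real.exp (-(α * s))
      ≤ α / (2*α - 1) * Real.exp ((α - 1) * e) + (α - 1) / (2*α - 1) * Real.exp (-(α * e)) := by
  have h21 : (0:ℝ) < 2*α - 1 := by linarith
  set G : ℝ → ℝ := fun x => α * Real.exp ((α - 1) * x) + (α - 1) * Real.exp (-(α * x)) with hG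
  have hd : ∀ x : ℝ, HasDerivAt G
      (α * (Real.exp ((α - 1) * x) * (α - 1)) + (α - 1) * (Real.exp (-(α * x)) * (-α))) x := by
    intro x
    have d1 : HasDerivAt (fun x : ℝ => (α - 1) * x) (α - 1) x := by
      simpa using (hasDerivAt_id x).const_mul (α - 1)
    have d2 : HasDerivAt (fun x : ℝ => -(α * x)) (-α) x := by
      simpa using (hasDerivAt_neg x).const_mul α
    exact ((d1.exp).const_mul α).add ((d2.exp).const_mul (α - 1))
  have hmono : MonotoneOn G (Set.Ici (0:ℝ)) := by
    apply monotoneOn_of_deriv_nonneg (convex_Ici 0)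
    · exact (Continuous.continuousOn (by fun_prop))
    · intro x _
      exact (hd x).differentiableAt.differentiableWithinAt
    · intro x hx
      rw [interior_Ici] at hx
      rw [(hd x).deriv]
      have hxpos : (0:ℝ) < x := hx
      have hle : Real.exp (-(α * x)) ≤ Real.exp ((α - 1) * x) :=
        Real.exp_le_exp.mpr (by nlinarith)
      have hmul := mul_le_mul_of_nonneg_left hle
        (show (0:ℝ) ≤ α * (α - 1) by nlinarith)
      nlinarith [hmul]
  have key : G s ≤ G e := hmono hs0 (le_trans hs0 hse) hse
  have hGs : α / (2*α - 1) * Real.exp ((α - 1) * s) + (α - 1) / (2*α - 1) * Real.exp (-(α * s))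
      = G s / (2*α - 1) := by simp only [hG]; field_simp
  have hGe : α / (2*α - 1) * Real.exp ((α - 1) * e) + (α - 1) / (2*α - 1) * Real.exp (-(α * e))
      = G e / (2*α - 1) := by simp only [hG]; field_simp
  rw [hGs, hGe]
  gcongr

theorem dp_init_score_rdp (n : ℕ) (hn : 1 ≤ n) (m ε α : ℝ)
    (hm : 0 < m) (hε : 0 < ε) (hα : 1 < α) (y : ℕ → ℝ) :
    (α - 1)⁻¹ * Real.log (∫ x : ℝ,
        laplacePDF ((1 / (n : ℝ)) * ∑ i ∈ Finset.range n, max (-m) (min (y i) m))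
          (2 * m / (((n : ℝ) + 1) * ε)) x ^ α *
        laplacePDF ((1 / ((n : ℝ) + 1)) * ∑ i ∈ Finset.range (n + 1), max (-m) (min (y i) m))
          (2 * m / (((n : ℝ) + 1) * ε)) x ^ (1 - α)) ≤
      (α - 1)⁻¹ * Real.log ((α / (2 * α - 1)) * Real.exp ((α - 1) * ε) +
        ((α - 1) / (2 * α - 1)) * Real.exp (-α * ε)) := by
  have hn' : (0:ℝ) < n := by
    have : 0 < n := by omega
    exact_mod_cast this
  have hn1 : (0:ℝ) < (n:ℝ) + 1 := by linarith
  have h21 : (0:ℝ) < 2*α - 1 := by linarith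
  set lam : ℝ := 2 * m / (((n : ℝ) + 1) * ε) with hlamdef
  have hlam : 0 < lam := by rw [hlamdef]; positivity
  set c : ℕ → ℝ := fun i => max (-m) (min (y i) m) with hcdef
  set M : ℝ := (1 / (n : ℝ)) * ∑ i ∈ Finset.range n, c i with hMdef
  set M' : ℝ := (1 / ((n : ℝ) + 1)) * ∑ i ∈ Finset.range (n + 1), c i with hM'def
  have hcb : ∀ i, |c i| ≤ m := by
    intro i
    refine abs_le.mpr ⟨le_max_left _ _, max_le (by linarith) (min_le_right _ _)⟩
  have hS : |∑ i ∈ Finset.range n, c i| ≤ (n : ℝ) * m := by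
    calc |∑ i ∈ Finset.range n, c i| ≤ ∑ i ∈ Finset.range n, |c i| :=
          Finset.abs_sum_le_sum_abs _ _
      _ ≤ ∑ _i ∈ Finset.range n, m := Finset.sum_le_sum fun i _ => hcb i
      _ = (n : ℝ) * m := by rw [Finset.sum_const, Finset.card_range, nsmul_eq_mul]
  have hdiff : |M - M'| ≤ 2 * m / ((n : ℝ) + 1) := by
    have hsum : ∑ i ∈ Finset.range (n+1), c i = (∑ i ∈ Finset.range n, c i) + c n :=
      Finset.sum_range_succ c n
    have hrepr : M - M' = (∑ i ∈ Finset.range n, c i) / ((n:ℝ) * ((n:ℝ)+1))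
        - c n / ((n:ℝ)+1) := by
      rw [hMdef, hM'def, hsum]
      field_simp
      ring
    rw [hrepr]
    have h1 : |(∑ i ∈ Finset.range n, c i) / ((n:ℝ) * ((n:ℝ)+1))| ≤ m / ((n:ℝ)+1) := by
      rw [abs_div, abs_of_pos (show (0:ℝ) < (n:ℝ) * ((n:ℝ)+1) by positivity)]
      rw [div_le_div_iff₀ (by positivity) hn1]
      nlinarith [mul_le_mul_of_nonneg_right hS (le_of_lt hn1)]
    have h2 : |c n / ((n:ℝ)+1)| ≤ m / ((n:ℝ)+1) := by
      rw [abs_div, abs_of_pos hn1]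
      gcongr
      exact hcb n
    calc |(∑ i ∈ Finset.range n, c i) / ((n:ℝ) * ((n:ℝ)+1)) - c n / ((n:ℝ)+1)|
        ≤ |(∑ i ∈ Finset.range n, c i) / ((n:ℝ) * ((n:ℝ)+1))| + |c n / ((n:ℝ)+1)| :=
          abs_sub _ _
      _ ≤ m / ((n:ℝ)+1) + m / ((n:ℝ)+1) := add_le_add h1 h2
      _ = 2 * m / ((n:ℝ)+1) := by ring
  have hlamε : lam * ε = 2 * m / ((n:ℝ)+1) := by
    rw [hlamdef]
    field_simp
  have hsε : |M - M'| / lam ≤ ε := by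
    rw [div_le_iff₀ hlam, mul_comm, hlamε]
    exact hdiff
  have hI := lap_integral' hlam hα M M'
  rw [hI]
  have hApos : (0:ℝ) < α / (2*α - 1) * Real.exp ((α - 1) * (|M - M'|/lam))
      + (α - 1) / (2*α - 1) * Real.exp (-(α * (|M - M'|/lam))) :=
    add_pos (mul_pos (div_pos (by linarith) h21) (Real.exp_pos _))
      (mul_pos (div_pos (by linarith) h21) (Real.exp_pos _))
  have hmono := A_mono hα (s := |M - M'|/lam) (e := ε) (by positivity) hsε
  refine mul_le_mul_of_nonneg_left ?_ (inv_nonneg.mpr (by linarith : (0:ℝ) ≤ α - 1))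
  rw [neg_mul]
  exact Real.log_le_log hApos hmono
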